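/- Let ψ(m) denote the minimum of |F_Δ| over all surjective colourings Δ : ℕ^(2) → [m]. Then ψ(binom(n,2)+1) = n for every n ≥ 2, and ψ(binom(n,2)+2) = n+1 for every n ≥ 2. -/

import Mathlib

/-- The set of colours appearing on edges inside `X` under the edge-colouring `Δ`
of the complete graph on `ℕ`. -/
def colorsOn {C : Type*} (Δ : ℕ → ℕ → C) (X : Set ℕ) : Set C :=
  {c | ∃ x ∈ X, ∃ y ∈ X, x ≠ y ∧ Δ x y = c}

/-- `F_Δ`: the set of values `γ(X)` (number of colours inside `X`)
over infinite `X ⊆ ℕ`. -/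
def FDelta {C : Type*} (Δ : ℕ → ℕ → C) : Set ℕ :=
  {k | ∃ X : Set ℕ, X.Infinite ∧ (colorsOn Δ X).ncard = k}

/-- `ψ(m)`: the minimum of `|F_Δ|` over all surjective symmetric colourings
`Δ : ℕ^(2) → [m]`. -/
noncomputable def psi (m : ℕ) : ℕ :=
  sInf {k | ∃ Δ : ℕ → ℕ → Fin m,
    (∀ x y, Δ x y = Δ y x) ∧
    (∀ c : Fin m, ∃ x y : ℕ, x ≠ y ∧ Δ x y = c) ∧
    (FDelta Δ).ncard = k}

set_option linter.unusedSectionVars false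
set_option maxHeartbeats 1000000



section Pigeon
variable {m : ℕ}

lemma infinite_fiber (f : ℕ → Fin m) (S : Set ℕ) (hS : S.Infinite) :
    ∃ c, {x | x ∈ S ∧ f x = c}.Infinite := by
  by_contra h
  push_neg at h
  exact hS (Set.Finite.subset (Set.finite_iUnion h)
    (fun x hx => Set.mem_iUnion.2 ⟨f x, hx, rfl⟩))

variable (Δ : ℕ → ℕ → Fin m)

lemma step_ex (S : Set ℕ) (hS : S.Infinite) :
    ∃ q : Set ℕ × Fin m, q.1.Infinite ∧ q.1 ⊆ S ∧
      (∀ y ∈ q.1, sInf S < y ∧ Δ (sInf S) y = q.2) := by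
  obtain ⟨c, hc⟩ := infinite_fiber (Δ (sInf S)) (S \ Set.Iic (sInf S))
    (hS.diff (Set.finite_Iic _))
  refine ⟨⟨{x | x ∈ S \ Set.Iic (sInf S) ∧ Δ (sInf S) x = c}, c⟩, hc, ?_, ?_⟩
  · exact fun x hx => hx.1.1
  · rintro y ⟨⟨hyS, hy⟩, hcol⟩
    exact ⟨by simpa using hy, hcol⟩

noncomputable def chain : ℕ → {S : Set ℕ // S.Infinite}
  | 0 => ⟨Set.univ, Set.infinite_univ⟩
  | k+1 => ⟨(Classical.choose (step_ex Δ (chain k).1 (chain k).2)).1,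
      (Classical.choose_spec (step_ex Δ (chain k).1 (chain k).2)).1⟩

noncomputable def xseq (k : ℕ) : ℕ := sInf (chain Δ k).1
noncomputable def colseq (k : ℕ) : Fin m :=
  (Classical.choose (step_ex Δ (chain Δ k).1 (chain Δ k).2)).2

lemma xseq_mem (k : ℕ) : xseq Δ k ∈ (chain Δ k).1 :=
  Nat.sInf_mem (chain Δ k).2.nonempty

lemma chain_succ_subset (k : ℕ) : (chain Δ (k+1)).1 ⊆ (chain Δ k).1 :=
  (Classical.choose_spec (step_ex Δ (chain Δ k).1 (chain Δ k).2)).2.1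

lemma chain_succ_spec (k : ℕ) : ∀ y ∈ (chain Δ (k+1)).1,
    xseq Δ k < y ∧ Δ (xseq Δ k) y = colseq Δ k :=
  (Classical.choose_spec (step_ex Δ (chain Δ k).1 (chain Δ k).2)).2.2

lemma chain_subset {j k : ℕ} (h : j ≤ k) : (chain Δ k).1 ⊆ (chain Δ j).1 := by
  induction k with
  | zero => simp_all
  | succ k ih =>
    rcases Nat.lt_or_ge j (k+1) with h' | h'
    · exact (chain_succ_subset Δ k).trans (ih (by omega))
    · have : j = k + 1 := by omega
      subst this; rfl

lemma xseq_spec {j k : ℕ} (h : j < k) :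
    xseq Δ j < xseq Δ k ∧ Δ (xseq Δ j) (xseq Δ k) = colseq Δ j := by
  have : xseq Δ k ∈ (chain Δ (j+1)).1 := chain_subset Δ h (xseq_mem Δ k)
  exact chain_succ_spec Δ j _ this

lemma xseq_strictMono : StrictMono (xseq Δ) :=
  strictMono_nat_of_lt_succ (fun k => (xseq_spec Δ (Nat.lt_succ_self k)).1)

lemma exists_mono (hsym : ∀ x y, Δ x y = Δ y x) :
    ∃ A : Set ℕ, A.Infinite ∧ ∃ a : Fin m,
      ∀ x ∈ A, ∀ y ∈ A, x ≠ y → Δ x y = a := by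
  obtain ⟨a, ha⟩ := infinite_fiber (colseq Δ) Set.univ Set.infinite_univ
  refine ⟨xseq Δ '' {k | colseq Δ k = a}, ?_, a, ?_⟩
  · exact Set.Infinite.image ((xseq_strictMono Δ).injective.injOn)
      (by simpa using ha)
  · rintro x ⟨j, hj, rfl⟩ y ⟨k, hk, rfl⟩ hne
    have hjk : j ≠ k := fun h => hne (by rw [h])
    rcases lt_or_gt_of_ne hjk with h | h
    · rw [(xseq_spec Δ h).2]; exact hj
    · rw [hsym, (xseq_spec Δ h).2]; exact hk

lemma homog (S : Finset ℕ) (B : Set ℕ) (hB : B.Infinite) :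
    ∃ A' : Set ℕ, A' ⊆ B ∧ A'.Infinite ∧
      ∀ v ∈ S, ∃ cv : Fin m, ∀ y ∈ A', Δ v y = cv := by
  classical
  induction S using Finset.induction_on with
  | empty => exact ⟨B, subset_rfl, hB, by simp⟩
  | @insert v S hv ih =>
    obtain ⟨A', hsub, hinf, hcv⟩ := ih
    obtain ⟨c, hc⟩ := infinite_fiber (Δ v) A' hinf
    refine ⟨{x | x ∈ A' ∧ Δ v x = c}, fun x hx => hsub hx.1, hc, ?_⟩
    intro w hw
    rcases Finset.mem_insert.1 hw with rfl | hw
    · exact ⟨c, fun y hy => hy.2⟩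
    · obtain ⟨cw, hcw⟩ := hcv w hw
      exact ⟨cw, fun y hy => hcw y hy.1⟩

end Pigeon

section Key
variable {m : ℕ} (G : Finset ℕ → Finset (Fin m)) (E : ℕ → ℕ → Fin m) (st : ℕ → Fin m)
variable (S : Finset ℕ)

lemma inc_step (mono : ∀ T v, G T ⊆ G (insert v T))
    (pair : ∀ T u w, G (insert u (insert w T)) ⊆ G (insert u T) ∪ G (insert w T) ∪ {E u w})
    (T : Finset ℕ) (u w : ℕ) :
    G (insert u (insert w T)) \ G (insert w T) ⊆ (G (insert u T) \ G T) ∪ {E u w} := by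
  intro c hc
  rcases Finset.mem_sdiff.1 hc with ⟨hbig, hnot⟩
  rcases Finset.mem_union.1 (pair T u w hbig) with h | h
  · rcases Finset.mem_union.1 h with h | h
    · exact Finset.mem_union_left _ (Finset.mem_sdiff.2 ⟨h, fun hmem => hnot (mono T w hmem)⟩)
    · exact absurd h hnot
  · exact Finset.mem_union_right _ h

lemma key_aux (mono : ∀ T v, G T ⊆ G (insert v T))
    (pair : ∀ T u w, G (insert u (insert w T)) ⊆ G (insert u T) ∪ G (insert w T) ∪ {E u w}) :
    ∀ (d : ℕ) (T : Finset ℕ) (k : ℕ) (V : Finset ℕ), T ⊆ S → (S \ T).card = d →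
    (∀ w ∈ S, w ∉ T → (G (insert w T) \ G T).card ≤ k + 1) →
    (G T).card ≤ (G ∅).card + (k+1).choose 2 →
    V.card = k + 1 → (∀ x ∈ V, (∃ R, R ⊆ T ∧ (G R).card = x) ∧ x ≤ (G T).card) →
    ∃ (K : ℕ) (V' : Finset ℕ), (G S).card ≤ (G ∅).card + (K+1).choose 2 ∧
      V'.card = K + 1 ∧ ∀ x ∈ V', ∃ R, R ⊆ S ∧ (G R).card = x := by
  classical
  intro d
  induction d with
  | zero =>
    intro T k V hTS hd hinc hcard hV hVv
    have hT : T = S := Finset.Subset.antisymm hTS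
      (fun x hx => by
        by_contra hxT
        have : x ∈ S \ T := Finset.mem_sdiff.2 ⟨hx, hxT⟩
        rw [Finset.card_eq_zero.1 hd] at this
        simp at this)
    subst hT
    exact ⟨k, V, hcard, hV, fun x hx => (hVv x hx).1⟩
  | succ d ih =>
    intro T k V hTS hd hinc hcard hV hVv
    have hne : (S \ T).Nonempty := Finset.card_pos.1 (by omega)
    -- helper: cardinality of increments
    have hGcard : ∀ w, (G (insert w T)).card = (G T).card + (G (insert w T) \ G T).card := by
      intro w
      have := Finset.card_sdiff_add_card_eq_card (mono T w); omega
    by_cases hstall : ∃ w ∈ S, w ∉ T ∧ 1 ≤ (G (insert w T) \ G T).card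
    · obtain ⟨w, hwS, hwT, hwinc⟩ := hstall
      have hsd : S \ insert w T = (S \ T).erase w := by
        ext x; simp only [Finset.mem_sdiff, Finset.mem_insert, Finset.mem_erase]
        tauto
      refine ih (insert w T) (k+1) (insert (G (insert w T)).card V) ?_ ?_ ?_ ?_ ?_ ?_
      · exact Finset.insert_subset hwS hTS
      · rw [hsd, Finset.card_erase_of_mem (Finset.mem_sdiff.2 ⟨hwS, hwT⟩)]; omega
      · intro w' hw'S hw'T
        have h1 : (G (insert w' (insert w T)) \ G (insert w T)).card
            ≤ (G (insert w' T) \ G T).card + 1 := by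
          calc (G (insert w' (insert w T)) \ G (insert w T)).card
              ≤ ((G (insert w' T) \ G T) ∪ {E w' w}).card :=
                Finset.card_le_card (inc_step G E mono pair T w' w)
            _ ≤ _ := (Finset.card_union_le _ _).trans (by simp)
        have h2 : (G (insert w' T) \ G T).card ≤ k + 1 :=
          hinc w' hw'S (fun h => hw'T (Finset.mem_insert_of_mem h))
        omega
      · have : (G (insert w T)).card ≤ (G T).card + (k+1) := by
          rw [hGcard w]
          have := hinc w hwS hwT
          omega
        have hch : (k+1+1).choose 2 = (k+1).choose 2 + (k+1) := by
          rw [Nat.choose_succ_succ (k+1) 1, Nat.choose_one_right]; ring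
        omega
      · rw [Finset.card_insert_of_notMem, hV]
        intro hmem
        have := (hVv _ hmem).2
        have : (G T).card < (G (insert w T)).card := by rw [hGcard w]; omega
        omega
      · intro x hx
        rcases Finset.mem_insert.1 hx with rfl | hx
        · exact ⟨⟨insert w T, subset_rfl, rfl⟩, le_rfl⟩
        · obtain ⟨⟨R, hR, hRc⟩, hxle⟩ := hVv x hx
          exact ⟨⟨R, hR.trans (Finset.subset_insert w T), hRc⟩,
            hxle.trans (Finset.card_le_card (mono T w))⟩
    · push_neg at hstall
      obtain ⟨w, hw⟩ := hne
      rcases Finset.mem_sdiff.1 hw with ⟨hwS, hwT⟩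
      have hzero : ∀ w' ∈ S, w' ∉ T → G (insert w' T) \ G T = ∅ := by
        intro w' h1 h2
        have := hstall w' h1 h2
        rw [← Finset.card_eq_zero]; omega
      have hGeq : G (insert w T) = G T := by
        apply Finset.Subset.antisymm _ (mono T w)
        intro c hc
        by_contra hcT
        have : c ∈ G (insert w T) \ G T := Finset.mem_sdiff.2 ⟨hc, hcT⟩
        rw [hzero w hwS hwT] at this; simp at this
      have hsd : S \ insert w T = (S \ T).erase w := by
        ext x; simp only [Finset.mem_sdiff, Finset.mem_insert, Finset.mem_erase]
        tauto
      refine ih (insert w T) k V ?_ ?_ ?_ ?_ hV ?_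
      · exact Finset.insert_subset hwS hTS
      · rw [hsd, Finset.card_erase_of_mem (Finset.mem_sdiff.2 ⟨hwS, hwT⟩)]; omega
      · intro w' hw'S hw'T
        have hw'Tn : w' ∉ T := fun h => hw'T (Finset.mem_insert_of_mem h)
        calc (G (insert w' (insert w T)) \ G (insert w T)).card
            ≤ ((G (insert w' T) \ G T) ∪ {E w' w}).card :=
              Finset.card_le_card (inc_step G E mono pair T w' w)
          _ ≤ (G (insert w' T) \ G T).card + 1 := (Finset.card_union_le _ _).trans (by simp)
          _ ≤ k + 1 := by rw [hzero w' hw'S hw'Tn]; simp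
      · rw [hGeq]; exact hcard
      · intro x hx
        obtain ⟨⟨R, hR, hRc⟩, hxle⟩ := hVv x hx
        exact ⟨⟨R, hR.trans (Finset.subset_insert w T), hRc⟩, by rw [hGeq]; exact hxle⟩

lemma key (mono : ∀ T v, G T ⊆ G (insert v T))
    (pair : ∀ T u w, G (insert u (insert w T)) ⊆ G (insert u T) ∪ G (insert w T) ∪ {E u w})
    (star : ∀ v ∈ S, G {v} ⊆ G ∅ ∪ {st v}) :
    ∃ (K : ℕ) (V' : Finset ℕ), (G S).card ≤ (G ∅).card + (K+1).choose 2 ∧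
      V'.card = K + 1 ∧ ∀ x ∈ V', ∃ R, R ⊆ S ∧ (G R).card = x := by
  classical
  refine key_aux G E S mono pair S.card ∅ 0 {(G ∅).card} (by simp) (by simp) ?_ (by simp) (by simp) ?_
  · intro w hwS _
    have : G (insert w ∅) \ G ∅ ⊆ {st w} := by
      intro c hc
      rcases Finset.mem_sdiff.1 hc with ⟨h1, h2⟩
      have := star w hwS (by simpa using h1)
      rcases Finset.mem_union.1 this with h | h
      · exact absurd h h2
      · exact h
    calc (G (insert w ∅) \ G ∅).card ≤ ({st w} : Finset (Fin m)).card := Finset.card_le_card this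
      _ ≤ 1 := by simp
  · intro x hx
    simp only [Finset.mem_singleton] at hx
    subst hx
    exact ⟨⟨∅, by simp, rfl⟩, le_rfl⟩

end Key
lemma colorsOn_mono {C : Type*} (Δ : ℕ → ℕ → C) {X Y : Set ℕ} (h : X ⊆ Y) :
    colorsOn Δ X ⊆ colorsOn Δ Y := by
  rintro c ⟨x, hx, y, hy, hxy, rfl⟩
  exact ⟨x, h hx, y, h hy, hxy, rfl⟩

lemma FDelta_finite {m : ℕ} (Δ : ℕ → ℕ → Fin m) : (FDelta Δ).Finite := by
  apply Set.Finite.subset (Set.finite_Iic m)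
  rintro k ⟨X, hX, rfl⟩
  simp only [Set.mem_Iic]
  calc (colorsOn Δ X).ncard ≤ (Set.univ : Set (Fin m)).ncard :=
        Set.ncard_le_ncard (Set.subset_univ _) Set.finite_univ
    _ = m := by simp [Set.ncard_univ]

lemma lower_bound {m : ℕ} (Δ : ℕ → ℕ → Fin m) (hsym : ∀ x y, Δ x y = Δ y x)
    (hsurj : ∀ c : Fin m, ∃ x y : ℕ, x ≠ y ∧ Δ x y = c) :
    m ≤ (FDelta Δ).ncard.choose 2 + 1 := by
  classical
  obtain ⟨A, hA, a, ha⟩ := exists_mono Δ hsym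
  have hpick : ∀ c : Fin m, ∃ p : ℕ × ℕ, p.1 ≠ p.2 ∧ Δ p.1 p.2 = c := by
    intro c; obtain ⟨x, y, h1, h2⟩ := hsurj c; exact ⟨(x, y), h1, h2⟩
  let pk : Fin m → ℕ × ℕ := fun c => Classical.choose (hpick c)
  have hpk : ∀ c, (pk c).1 ≠ (pk c).2 ∧ Δ (pk c).1 (pk c).2 = c :=
    fun c => Classical.choose_spec (hpick c)
  let S : Finset ℕ := Finset.univ.image (fun c => (pk c).1) ∪
      Finset.univ.image (fun c => (pk c).2)
  obtain ⟨A', hA'sub, hA'inf, hcv⟩ := homog Δ S (A \ ↑S) (hA.diff (Finset.finite_toSet S))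
  have hA'A : A' ⊆ A := hA'sub.trans Set.diff_subset
  let st : ℕ → Fin m := fun v => if h : v ∈ S then Classical.choose (hcv v h) else Δ 0 0
  have hst : ∀ v ∈ S, ∀ y ∈ A', Δ v y = st v := by
    intro v hv y hy
    simp only [st, dif_pos hv]
    exact Classical.choose_spec (hcv v hv) y hy
  let G : Finset ℕ → Finset (Fin m) :=
    fun T => (Set.toFinite (colorsOn Δ (↑T ∪ A'))).toFinset
  have hGmem : ∀ T c, c ∈ G T ↔ c ∈ colorsOn Δ (↑T ∪ A') := by
    intro T c; exact Set.Finite.mem_toFinset _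
  have mono : ∀ T v, G T ⊆ G (insert v T) := by
    intro T v c hc
    rw [hGmem] at hc ⊢
    refine colorsOn_mono Δ (Set.union_subset_union_left _ ?_) hc
    rw [Finset.coe_insert]; exact Set.subset_insert _ _
  have pair : ∀ T u w, G (insert u (insert w T)) ⊆ G (insert u T) ∪ G (insert w T) ∪ {Δ u w} := by
    intro T u w c hc
    rw [hGmem] at hc
    obtain ⟨x, hx, y, hy, hxy, rfl⟩ := hc
    have hmemP : ∀ z, z ∈ (↑(insert u (insert w T)) : Set ℕ) ∪ A' → z ≠ w →
        z ∈ (↑(insert u T) : Set ℕ) ∪ A' := by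
      intro z hz hzw
      simp only [Finset.coe_insert, Set.mem_union, Set.mem_insert_iff] at hz ⊢
      tauto
    have hmemQ : ∀ z, z ∈ (↑(insert u (insert w T)) : Set ℕ) ∪ A' → z ≠ u →
        z ∈ (↑(insert w T) : Set ℕ) ∪ A' := by
      intro z hz hzu
      simp only [Finset.coe_insert, Set.mem_union, Set.mem_insert_iff] at hz ⊢
      tauto
    have hwQ : w ∈ (↑(insert w T) : Set ℕ) ∪ A' := by
      simp [Finset.coe_insert]
    have inP : ∀ x' y', x' ∈ (↑(insert u T) : Set ℕ) ∪ A' → y' ∈ (↑(insert u T) : Set ℕ) ∪ A' →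
        x' ≠ y' → Δ x' y' ∈ G (insert u T) ∪ G (insert w T) ∪ {Δ u w} := by
      intro x' y' h1 h2 h3
      exact Finset.mem_union_left _ (Finset.mem_union_left _
        ((hGmem _ _).2 ⟨x', h1, y', h2, h3, rfl⟩))
    have inQ : ∀ x' y', x' ∈ (↑(insert w T) : Set ℕ) ∪ A' → y' ∈ (↑(insert w T) : Set ℕ) ∪ A' →
        x' ≠ y' → Δ x' y' ∈ G (insert u T) ∪ G (insert w T) ∪ {Δ u w} := by
      intro x' y' h1 h2 h3
      exact Finset.mem_union_left _ (Finset.mem_union_right _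
        ((hGmem _ _).2 ⟨x', h1, y', h2, h3, rfl⟩))
    by_cases hxw : x = w
    · by_cases hyu : y = u
      · subst hxw; subst hyu
        rw [hsym]
        exact Finset.mem_union_right _ (by simp)
      · subst hxw
        exact inQ _ _ hwQ (hmemQ y hy hyu) hxy
    · by_cases hyw : y = w
      · by_cases hxu : x = u
        · subst hxu; subst hyw
          exact Finset.mem_union_right _ (by simp)
        · subst hyw
          exact inQ _ _ (hmemQ x hx hxu) hwQ hxy
      · exact inP _ _ (hmemP x hx hxw) (hmemP y hy hyw) hxy
  have star : ∀ v ∈ S, G {v} ⊆ G ∅ ∪ {st v} := by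
    intro v hv c hc
    rw [hGmem] at hc
    obtain ⟨x, hx, y, hy, hxy, rfl⟩ := hc
    simp only [Finset.coe_singleton, Set.mem_union, Set.mem_singleton_iff] at hx hy
    rcases hx with rfl | hx
    · rcases hy with rfl | hy
      · exact absurd rfl hxy
      · rw [hst x hv y hy]
        exact Finset.mem_union_right _ (by simp)
    · rcases hy with rfl | hy
      · rw [hsym, hst y hv x hx]
        exact Finset.mem_union_right _ (by simp)
      · refine Finset.mem_union_left _ ((hGmem _ _).2 ?_)
        exact ⟨x, by simp [hx], y, by simp [hy], hxy, rfl⟩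
  -- G ∅ has exactly one colour
  have hGempty : G ∅ = {a} := by
    ext c
    rw [hGmem]
    simp only [Finset.coe_empty, Set.empty_union, Finset.mem_singleton]
    constructor
    · rintro ⟨x, hx, y, hy, hxy, rfl⟩
      exact ha x (hA'A hx) y (hA'A hy) hxy
    · rintro rfl
      obtain ⟨x, hx⟩ := hA'inf.nonempty
      obtain ⟨y, hy⟩ := (hA'inf.diff (Set.finite_singleton x)).nonempty
      exact ⟨x, hx, y, hy.1, fun h => hy.2 (by simp [h.symm]), ha x (hA'A hx) y (hA'A hy.1)
        (fun h => hy.2 (by simp [h.symm]))⟩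
  -- G S has all colours
  have hGS : G S = Finset.univ := by
    apply Finset.eq_univ_of_forall
    intro c
    rw [hGmem]
    refine ⟨(pk c).1, ?_, (pk c).2, ?_, (hpk c).1, (hpk c).2⟩
    · left
      simp only [S, Finset.coe_union, Set.mem_union, Finset.coe_image]
      left; exact ⟨c, by simp⟩
    · left
      simp only [S, Finset.coe_union, Set.mem_union, Finset.coe_image]
      right; exact ⟨c, by simp⟩
  obtain ⟨K, V, hcard, hVcard, hVmem⟩ := key G Δ st S mono pair star
  rw [hGS, hGempty] at hcard
  simp only [Finset.card_univ, Fintype.card_fin, Finset.card_singleton] at hcard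
  -- values in V are in FDelta
  have hVF : (↑V : Set ℕ) ⊆ FDelta Δ := by
    intro x hx
    obtain ⟨R, _, hRc⟩ := hVmem x hx
    refine ⟨↑R ∪ A', hA'inf.mono Set.subset_union_right, ?_⟩
    rw [Set.ncard_eq_toFinset_card (colorsOn Δ (↑R ∪ A')) (Set.toFinite _)]
    exact hRc
  have hKt : K + 1 ≤ (FDelta Δ).ncard := by
    calc K + 1 = V.card := hVcard.symm
      _ = (↑V : Set ℕ).ncard := (Set.ncard_coe_finset V).symm
      _ ≤ (FDelta Δ).ncard := Set.ncard_le_ncard hVF (FDelta_finite Δ)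
  calc m ≤ 1 + (K+1).choose 2 := hcard
    _ ≤ 1 + (FDelta Δ).ncard.choose 2 := by
        exact Nat.add_le_add_left (Nat.choose_le_choose 2 hKt) 1
    _ = (FDelta Δ).ncard.choose 2 + 1 := by ring


section Clamp

variable (N : ℕ) [NeZero N]

lemma Npos : 0 < N := Nat.pos_of_ne_zero (NeZero.ne N)

def pc (x : ℕ) : Fin N := ⟨min x (N-1), by have := Npos N; omega⟩

def lastF : Fin N := ⟨N-1, by have := Npos N; omega⟩

variable {N}

lemma pc_large {x : ℕ} (hx : N - 1 ≤ x) : pc N x = lastF N := by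
  simp only [pc, lastF, Fin.mk.injEq]
  omega

lemma pc_small {x : ℕ} (hx : x ≤ N - 1) : (pc N x).val = x := by
  simp only [pc]; omega

lemma pc_diag {x y : ℕ} (hxy : x ≠ y) (h : pc N x = pc N y) :
    pc N x = lastF N := by
  have := congrArg Fin.val h
  simp only [pc] at this ⊢
  simp only [lastF, Fin.mk.injEq]
  omega

variable (N)

noncomputable def PFin (X : Set ℕ) : Finset (Fin N) :=
  (Set.toFinite (pc N '' X)).toFinset

variable {N}

lemma mem_PFin {X : Set ℕ} {i : Fin N} : i ∈ PFin N X ↔ ∃ x ∈ X, pc N x = i := by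
  simp [PFin, Set.Finite.mem_toFinset]

lemma last_mem_PFin {X : Set ℕ} (hX : X.Infinite) : lastF N ∈ PFin N X := by
  obtain ⟨x, hx⟩ := (hX.diff (Set.finite_Iio (N-1))).nonempty
  exact mem_PFin.2 ⟨x, hx.1, pc_large (by simpa using hx.2)⟩

lemma PFin_card_pos {X : Set ℕ} (hX : X.Infinite) : 1 ≤ (PFin N X).card :=
  Finset.card_pos.2 ⟨_, last_mem_PFin hX⟩

lemma PFin_card_le {X : Set ℕ} : (PFin N X).card ≤ N := by
  simpa using Finset.card_le_univ (PFin N X)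

lemma colorsOn_clamp {C : Type*} [DecidableEq C] (F : Sym2 (Fin N) → C) (X : Set ℕ) (hX : X.Infinite) :
    colorsOn (fun x y => F s(pc N x, pc N y)) X =
      ↑(((PFin N X).offDiag.image (fun q => F s(q.1, q.2))) ∪
        {F s(lastF N, lastF N)}) := by
  ext c
  simp only [Finset.coe_union, Finset.coe_image, Set.mem_union, Set.mem_image,
    Finset.mem_coe, Finset.coe_singleton, Set.mem_singleton_iff]
  constructor
  · rintro ⟨x, hx, y, hy, hxy, rfl⟩
    by_cases h : pc N x = pc N y
    · right
      show F s(pc N x, pc N y) = _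
      rw [pc_diag hxy h, pc_diag (Ne.symm hxy) h.symm]
    · left
      exact ⟨(pc N x, pc N y), Finset.mem_offDiag.2
        ⟨mem_PFin.2 ⟨x, hx, rfl⟩, mem_PFin.2 ⟨y, hy, rfl⟩, h⟩, rfl⟩
  · rintro (⟨q, hq, rfl⟩ | rfl)
    · obtain ⟨h1, h2, hne⟩ := Finset.mem_offDiag.1 hq
      obtain ⟨x, hx, hx'⟩ := mem_PFin.1 h1
      obtain ⟨y, hy, hy'⟩ := mem_PFin.1 h2
      refine ⟨x, hx, y, hy, ?_, by show F s(pc N x, pc N y) = _; rw [hx', hy']⟩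
      rintro rfl
      exact hne (hx' ▸ hy')
    · obtain ⟨x, hx⟩ := (hX.diff (Set.finite_Iio (N-1))).nonempty
      obtain ⟨y, hy⟩ := ((hX.diff (Set.finite_Iio (N-1))).diff (Set.finite_singleton x)).nonempty
      refine ⟨x, hx.1, y, hy.1.1, ?_, ?_⟩
      · rintro rfl; exact hy.2 rfl
      · show F s(pc N x, pc N y) = _
        rw [pc_large (by simpa using hx.2), pc_large (by simpa using hy.1.2)]

end Clamp


lemma sym2_exists {α : Type*} (s : Sym2 α) : ∃ a b, s = s(a, b) :=
  Sym2.ind (fun a b => ⟨a, b, rfl⟩) s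

section C1
variable (n : ℕ) [NeZero n]

abbrev C1 := {s : Sym2 (Fin n) // ¬ s.IsDiag} ⊕ Unit

lemma card_C1 : Fintype.card (C1 n) = n.choose 2 + 1 := by
  rw [Fintype.card_sum, Sym2.card_subtype_not_diag, Fintype.card_unit, Fintype.card_fin]

noncomputable def e1 : C1 n ≃ Fin (n.choose 2 + 1) :=
  Fintype.equivFinOfCardEq (card_C1 n)

def g1 : Sym2 (Fin n) → C1 n := fun s => if h : s.IsDiag then Sum.inr () else Sum.inl ⟨s, h⟩

noncomputable def Δ1 : ℕ → ℕ → Fin (n.choose 2 + 1) :=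
  fun x y => e1 n (g1 n s(pc n x, pc n y))

lemma Δ1_symm : ∀ x y, Δ1 n x y = Δ1 n y x := by
  intro x y
  simp only [Δ1]
  rw [Sym2.eq_swap]

lemma Δ1_surj (hn : 2 ≤ n) : ∀ c : Fin (n.choose 2 + 1), ∃ x y : ℕ, x ≠ y ∧ Δ1 n x y = c := by
  intro c
  have hc : c = e1 n ((e1 n).symm c) := ((e1 n).apply_symm_apply c).symm
  rcases h : (e1 n).symm c with v | u
  · obtain ⟨s, hs⟩ := v
    obtain ⟨a, b, rfl⟩ := sym2_exists s
    have hab : a ≠ b := by simpa [Sym2.mk_isDiag_iff] using hs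
    refine ⟨a.val, b.val, fun hh => hab (Fin.ext hh), ?_⟩
    have hpa : pc n a.val = a := Fin.ext (pc_small (by omega))
    have hpb : pc n b.val = b := Fin.ext (pc_small (by omega))
    rw [Δ1, hpa, hpb, hc, h]
    congr 1
    simp only [g1, dif_neg hs]
  · refine ⟨n - 1, n, by omega, ?_⟩
    have h1 : pc n (n-1) = lastF n := pc_large le_rfl
    have h2 : pc n n = lastF n := pc_large (by omega)
    rw [Δ1, h1, h2, hc, h]
    congr 1
    simp only [g1, dif_pos (Sym2.mk_isDiag_iff.2 rfl)]

lemma count1 (X : Set ℕ) (hX : X.Infinite) :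
    (colorsOn (Δ1 n) X).ncard = (PFin n X).card.choose 2 + 1 := by
  classical
  have heq : colorsOn (Δ1 n) X =
      ↑(((PFin n X).offDiag.image (fun q => e1 n (g1 n s(q.1, q.2)))) ∪
        {e1 n (g1 n s(lastF n, lastF n))}) :=
    colorsOn_clamp (fun s => e1 n (g1 n s)) X hX
  rw [heq, Set.ncard_coe_finset]
  have himg : (PFin n X).offDiag.image (fun q => e1 n (g1 n s(q.1, q.2))) =
      ((PFin n X).offDiag.image (fun q : Fin n × Fin n => s(q.1, q.2))).image
        (fun s => e1 n (g1 n s)) := by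
    rw [Finset.image_image]
    rfl
  have hnd : ∀ s ∈ (PFin n X).offDiag.image (fun q : Fin n × Fin n => s(q.1, q.2)),
      ¬ s.IsDiag := by
    intro s hs
    obtain ⟨q, hq, rfl⟩ := Finset.mem_image.1 hs
    exact fun hd => (Finset.mem_offDiag.1 hq).2.2 (Sym2.mk_isDiag_iff.1 hd)
  have hinj : Set.InjOn (fun s => e1 n (g1 n s))
      ↑((PFin n X).offDiag.image (fun q : Fin n × Fin n => s(q.1, q.2))) := by
    intro s hs s' hs' hss
    have h1 := hnd s (by simpa using hs)
    have h2 := hnd s' (by simpa using hs')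
    simp only [g1, dif_neg h1, dif_neg h2] at hss
    have := (e1 n).injective hss
    simpa using this
  have hdiagc : g1 n s(lastF n, lastF n) = Sum.inr () := by
    simp only [g1, dif_pos (Sym2.mk_isDiag_iff.2 rfl)]
  have hdisj : Disjoint ((PFin n X).offDiag.image (fun q => e1 n (g1 n s(q.1, q.2))))
      {e1 n (g1 n s(lastF n, lastF n))} := by
    rw [Finset.disjoint_singleton_right, himg]
    intro hmem
    obtain ⟨s, hs, heq'⟩ := Finset.mem_image.1 hmem
    have h1 := hnd s hs
    rw [hdiagc] at heq'
    have := (e1 n).injective heq'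
    simp only [g1, dif_neg h1] at this
    exact absurd this (by simp)
  rw [Finset.card_union_of_disjoint hdisj, Finset.card_singleton, himg,
    Finset.card_image_of_injOn hinj]
  exact congrArg (· + 1) (Sym2.card_image_offDiag (PFin n X))

lemma FDelta1 (hn : 2 ≤ n) : FDelta (Δ1 n) = (fun j => j.choose 2 + 1) '' (Set.Icc 1 n) := by
  ext k
  constructor
  · rintro ⟨X, hX, rfl⟩
    exact ⟨(PFin n X).card, Set.mem_Icc.2 ⟨PFin_card_pos hX, PFin_card_le⟩, (count1 n X hX).symm⟩
  · rintro ⟨j, hj, rfl⟩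
    rw [Set.mem_Icc] at hj
    set X : Set ℕ := {x | x < j - 1} ∪ {x | n - 1 ≤ x} with hXdef
    have hX : X.Infinite := by
      apply Set.Infinite.mono (Set.subset_union_right)
      apply Set.infinite_of_not_bddAbove
      rintro ⟨b, hb⟩
      have h1 : b + n ≤ b := hb (show b + n ∈ {x | n - 1 ≤ x} from by
        simp only [Set.mem_setOf_eq]; omega)
      omega
    refine ⟨X, hX, ?_⟩
    rw [count1 n X hX]
    have hPF : PFin n X = (Finset.range (j-1) ∪ {n-1}).image (pc n) := by
      ext i
      rw [mem_PFin, Finset.mem_image]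
      constructor
      · rintro ⟨x, hx, rfl⟩
        rcases hx with hx | hx
        · exact ⟨x, by simp only [Finset.mem_union, Finset.mem_range, Finset.mem_singleton]; left; exact hx, rfl⟩
        · refine ⟨n-1, by simp, ?_⟩
          rw [pc_large le_rfl, pc_large hx]
      · rintro ⟨k', hk', rfl⟩
        simp only [Finset.mem_union, Finset.mem_range, Finset.mem_singleton] at hk'
        rcases hk' with hk' | rfl
        · exact ⟨k', Or.inl hk', rfl⟩
        · exact ⟨n-1, Or.inr (Set.mem_setOf_eq ▸ (le_rfl : n - 1 ≤ n - 1)), rfl⟩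
    have hcard : (PFin n X).card = j := by
      rw [hPF]
      have hinj2 : Set.InjOn (pc n) ↑(Finset.range (j-1) ∪ {n-1}) := by
        intro x hx y hy hxy
        simp only [Finset.coe_union, Finset.coe_singleton, Finset.coe_range, Set.mem_union,
          Set.mem_Iio, Set.mem_singleton_iff] at hx hy
        have hx' : x ≤ n - 1 := by rcases hx with h | h; omega; omega
        have hy' : y ≤ n - 1 := by rcases hy with h | h; omega; omega
        have := congrArg Fin.val hxy
        rw [pc_small hx', pc_small hy'] at this
        exact this
      rw [Finset.card_image_of_injOn hinj2, Finset.card_union_of_disjoint (by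
        simp only [Finset.disjoint_singleton_right, Finset.mem_range]
        omega)]
      simp only [Finset.card_range, Finset.card_singleton]
      omega
    rw [hcard]

lemma choose_two_lt {a b : ℕ} (ha : 1 ≤ a) (h : a < b) : a.choose 2 < b.choose 2 := by
  have h1 : (a+1).choose 2 = a + a.choose 2 := by
    rw [Nat.choose_succ_succ a 1, Nat.choose_one_right]
  have h2 : (a+1).choose 2 ≤ b.choose 2 := Nat.choose_le_choose 2 h
  omega

lemma ncard_FDelta1 (hn : 2 ≤ n) : (FDelta (Δ1 n)).ncard = n := by
  rw [FDelta1 n hn]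
  rw [Set.ncard_image_of_injOn (by
    intro a ha b hb hab
    simp only [Set.mem_Icc] at ha hb
    simp only [add_left_inj] at hab
    by_contra hne
    rcases lt_or_gt_of_ne hne with h | h
    · exact absurd hab (Nat.ne_of_lt (choose_two_lt ha.1 h))
    · exact absurd hab.symm (Nat.ne_of_lt (choose_two_lt hb.1 h)))]
  rw [← Finset.coe_Icc, Set.ncard_coe_finset, Nat.card_Icc]
  omega

end C1

section C2
variable (n : ℕ) [NeZero n]

abbrev C2 := {s : Sym2 (Fin n) // ¬ s.IsDiag} ⊕ Bool

lemma card_C2 : Fintype.card (C2 n) = n.choose 2 + 2 := by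
  rw [Fintype.card_sum, Sym2.card_subtype_not_diag, Fintype.card_bool, Fintype.card_fin]

noncomputable def e2 : C2 n ≃ Fin (n.choose 2 + 2) :=
  Fintype.equivFinOfCardEq (card_C2 n)

def low : Fin (n+1) → Fin n := fun i => ⟨min i.val (n-1), by have := Npos n; omega⟩

lemma low_val {i : Fin (n+1)} (h : i ≠ Fin.last n) : (low n i).val = i.val := by
  have hi : i.val ≠ n := fun hh => h (Fin.ext (by simpa using hh))
  have : i.val ≤ n := Fin.is_le i
  simp only [low]
  omega

lemma map_low_nondiag {s : Sym2 (Fin (n+1))} (h1 : ¬s.IsDiag) (h2 : Fin.last n ∉ s) :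
    ¬(s.map (low n)).IsDiag := by
  obtain ⟨a, b, rfl⟩ := sym2_exists s
  rw [Sym2.map_pair_eq]
  intro hd
  have hab : low n a = low n b := Sym2.mk_isDiag_iff.1 hd
  have ha : a ≠ Fin.last n := fun hh => h2 (by rw [hh]; exact Sym2.mem_mk_left _ _)
  have hb : b ≠ Fin.last n := fun hh => h2 (by rw [hh]; exact Sym2.mem_mk_right _ _)
  have := congrArg Fin.val hab
  rw [low_val n ha, low_val n hb] at this
  exact h1 (Sym2.mk_isDiag_iff.2 (Fin.ext this))

lemma map_low_inj {s s' : Sym2 (Fin (n+1))}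
    (hs2 : Fin.last n ∉ s) (hs2' : Fin.last n ∉ s')
    (h : s.map (low n) = s'.map (low n)) : s = s' := by
  obtain ⟨a, b, rfl⟩ := sym2_exists s
  obtain ⟨c, d, rfl⟩ := sym2_exists s'
  rw [Sym2.map_pair_eq, Sym2.map_pair_eq] at h
  have ha : a ≠ Fin.last n := fun hh => hs2 (by rw [hh]; exact Sym2.mem_mk_left _ _)
  have hb : b ≠ Fin.last n := fun hh => hs2 (by rw [hh]; exact Sym2.mem_mk_right _ _)
  have hc : c ≠ Fin.last n := fun hh => hs2' (by rw [hh]; exact Sym2.mem_mk_left _ _)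
  have hd : d ≠ Fin.last n := fun hh => hs2' (by rw [hh]; exact Sym2.mem_mk_right _ _)
  rcases (Sym2.mk_eq_mk_iff (p := (low n a, low n b)) (q := (low n c, low n d))).1 h with h' | h'
  · have e1 : low n a = low n c := congrArg Prod.fst h'
    have e2 : low n b = low n d := congrArg Prod.snd h'
    have v1 := congrArg Fin.val e1; rw [low_val n ha, low_val n hc] at v1
    have v2 := congrArg Fin.val e2; rw [low_val n hb, low_val n hd] at v2
    rw [Fin.ext v1, Fin.ext v2]
  · have e1 : low n a = low n d := congrArg Prod.fst h'
    have e2 : low n b = low n c := congrArg Prod.snd h'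
    have v1 := congrArg Fin.val e1; rw [low_val n ha, low_val n hd] at v1
    have v2 := congrArg Fin.val e2; rw [low_val n hb, low_val n hc] at v2
    rw [Fin.ext v1, Fin.ext v2, Sym2.eq_swap]

def g2 : Sym2 (Fin (n+1)) → C2 n := fun s =>
  if h1 : s.IsDiag then .inr true
  else if h2 : Fin.last n ∈ s then .inr false
  else .inl ⟨s.map (low n), map_low_nondiag n h1 h2⟩

noncomputable def Δ2 : ℕ → ℕ → Fin (n.choose 2 + 2) :=
  fun x y => e2 n (g2 n s(pc (n+1) x, pc (n+1) y))

lemma lastF_eq : lastF (n+1) = Fin.last n := rfl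

lemma Δ2_symm : ∀ x y, Δ2 n x y = Δ2 n y x := by
  intro x y
  simp only [Δ2]
  rw [Sym2.eq_swap]

lemma Δ2_surj : ∀ c : Fin (n.choose 2 + 2), ∃ x y : ℕ, x ≠ y ∧ Δ2 n x y = c := by
  intro c
  have hn1 : 1 ≤ n := Nat.one_le_iff_ne_zero.2 (NeZero.ne n)
  have hc : c = e2 n ((e2 n).symm c) := ((e2 n).apply_symm_apply c).symm
  rcases h : (e2 n).symm c with v | b
  · obtain ⟨s, hs⟩ := v
    obtain ⟨a, b, rfl⟩ := sym2_exists s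
    have hab : a ≠ b := by simpa [Sym2.mk_isDiag_iff] using hs
    refine ⟨a.val, b.val, fun hh => hab (Fin.ext hh), ?_⟩
    have hpa : (pc (n+1) a.val) = ⟨a.val, by omega⟩ :=
      Fin.ext (pc_small (by have := a.isLt; omega))
    have hpb : (pc (n+1) b.val) = ⟨b.val, by omega⟩ :=
      Fin.ext (pc_small (by have := b.isLt; omega))
    rw [Δ2, hpa, hpb, hc, h]
    congr 1
    have hd : ¬(s(⟨a.val, by omega⟩, (⟨b.val, by omega⟩ : Fin (n+1)))).IsDiag := by
      rw [Sym2.mk_isDiag_iff]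
      intro hh
      simp only [Fin.mk.injEq] at hh
      exact hab (Fin.ext hh)
    have hl : Fin.last n ∉ s(⟨a.val, by omega⟩, (⟨b.val, by omega⟩ : Fin (n+1))) := by
      rw [Sym2.mem_iff]
      rintro (hh | hh) <;>
        · have := congrArg Fin.val hh
          simp only [Fin.val_last] at this
          omega
    simp only [g2, dif_neg hd, dif_neg hl]
    congr 1
    apply Subtype.ext
    simp only [Sym2.map_pair_eq]
    have hnea : (⟨a.val, by omega⟩ : Fin (n+1)) ≠ Fin.last n := by
      intro hh
      have hv := congrArg Fin.val hh
      simp only [Fin.val_last] at hv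
      have := a.isLt
      omega
    have hneb : (⟨b.val, by omega⟩ : Fin (n+1)) ≠ Fin.last n := by
      intro hh
      have hv := congrArg Fin.val hh
      simp only [Fin.val_last] at hv
      have := b.isLt
      omega
    have l1 : low n (⟨a.val, by omega⟩ : Fin (n+1)) = a := Fin.ext (low_val n hnea)
    have l2 : low n (⟨b.val, by omega⟩ : Fin (n+1)) = b := Fin.ext (low_val n hneb)
    rw [l1, l2]
  · cases b
    · -- inr false : one special, one rest : x = 0, y = n+1? need p x ≠ last, p y = last
      refine ⟨0, n, by omega, ?_⟩
      have hp0 : (pc (n+1) 0) = ⟨0, by omega⟩ := Fin.ext (pc_small (by omega))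
      have hpn : (pc (n+1) n) = Fin.last n := by
        rw [pc_large (by omega)]; rfl
      rw [Δ2, hp0, hpn, hc, h]
      congr 1
      have hd : ¬(s((⟨0, by omega⟩ : Fin (n+1)), Fin.last n)).IsDiag := by
        rw [Sym2.mk_isDiag_iff]
        intro hh
        have := congrArg Fin.val hh
        simp only [Fin.val_last] at this
        omega
      simp only [g2, dif_neg hd, dif_pos (Sym2.mem_mk_right _ _)]
    · refine ⟨n, n+1, by omega, ?_⟩
      have h1 : pc (n+1) n = lastF (n+1) := pc_large (by omega)
      have h2 : pc (n+1) (n+1) = lastF (n+1) := pc_large (by omega)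
      rw [Δ2, h1, h2, hc, h]
      congr 1
      simp only [g2, dif_pos (Sym2.mk_isDiag_iff.2 rfl)]

lemma count2 (X : Set ℕ) (hX : X.Infinite) :
    (colorsOn (Δ2 n) X).ncard =
      (if ((PFin (n+1) X).erase (Fin.last n)).card = 0 then 1
       else ((PFin (n+1) X).erase (Fin.last n)).card.choose 2 + 2) := by
  classical
  set PF := PFin (n+1) X with hPFdef
  set PF' := PF.erase (Fin.last n) with hPF'def
  set k := PF'.card with hk
  have heq : colorsOn (Δ2 n) X =
      ↑((PF.offDiag.image (fun q => e2 n (g2 n s(q.1, q.2)))) ∪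
        {e2 n (g2 n s(lastF (n+1), lastF (n+1)))}) :=
    colorsOn_clamp (fun s => e2 n (g2 n s)) X hX
  rw [heq, Set.ncard_coe_finset]
  have hdiagc : g2 n s(lastF (n+1), lastF (n+1)) = Sum.inr true := by
    simp only [g2, dif_pos (Sym2.mk_isDiag_iff.2 rfl)]
  have himg : PF.offDiag.image (fun q => e2 n (g2 n s(q.1, q.2))) =
      (PF.offDiag.image (fun q : Fin (n+1) × Fin (n+1) => s(q.1, q.2))).image
        (fun s => e2 n (g2 n s)) := by
    rw [Finset.image_image]; rfl
  -- decompose D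
  have hD : PF.offDiag.image (fun q : Fin (n+1) × Fin (n+1) => s(q.1, q.2)) =
      (PF'.offDiag.image (fun q : Fin (n+1) × Fin (n+1) => s(q.1, q.2))) ∪
      (PF'.image (fun i => s(Fin.last n, i))) := by
    have hlastPF : Fin.last n ∈ PF := by
      rw [← lastF_eq]; exact last_mem_PFin hX
    ext s
    simp only [Finset.mem_union, Finset.mem_image]
    constructor
    · rintro ⟨q, hq, rfl⟩
      obtain ⟨hq1, hq2, hne⟩ := Finset.mem_offDiag.1 hq
      by_cases h1 : q.1 = Fin.last n
      · right
        refine ⟨q.2, Finset.mem_erase.2 ⟨fun hh => hne (h1 ▸ hh ▸ rfl), hq2⟩, by rw [h1]⟩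
      · by_cases h2 : q.2 = Fin.last n
        · right
          refine ⟨q.1, Finset.mem_erase.2 ⟨h1, hq1⟩, by rw [h2, Sym2.eq_swap]⟩
        · left
          exact ⟨q, Finset.mem_offDiag.2 ⟨Finset.mem_erase.2 ⟨h1, hq1⟩,
            Finset.mem_erase.2 ⟨h2, hq2⟩, hne⟩, rfl⟩
    · rintro (⟨q, hq, rfl⟩ | ⟨i, hi, rfl⟩)
      · obtain ⟨hq1, hq2, hne⟩ := Finset.mem_offDiag.1 hq
        exact ⟨q, Finset.mem_offDiag.2 ⟨(Finset.mem_erase.1 hq1).2,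
          (Finset.mem_erase.1 hq2).2, hne⟩, rfl⟩
      · obtain ⟨hine, hiPF⟩ := Finset.mem_erase.1 hi
        exact ⟨(Fin.last n, i), Finset.mem_offDiag.2 ⟨hlastPF, hiPF, fun hh => hine hh.symm⟩, rfl⟩
  -- members of left part avoid last and are nondiag
  have hleft : ∀ s ∈ PF'.offDiag.image (fun q : Fin (n+1) × Fin (n+1) => s(q.1, q.2)),
      ¬s.IsDiag ∧ Fin.last n ∉ s := by
    intro s hs
    obtain ⟨q, hq, rfl⟩ := Finset.mem_image.1 hs
    obtain ⟨hq1, hq2, hne⟩ := Finset.mem_offDiag.1 hq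
    refine ⟨fun hd => hne (Sym2.mk_isDiag_iff.1 hd), ?_⟩
    rw [Sym2.mem_iff]
    rintro (hh | hh)
    · exact (Finset.mem_erase.1 hq1).1 hh.symm
    · exact (Finset.mem_erase.1 hq2).1 hh.symm
  by_cases hk0 : k = 0
  · -- PF' empty
    have hPF'e : PF' = ∅ := Finset.card_eq_zero.1 hk0
    rw [himg, hD, hPF'e]
    simp only [Finset.offDiag_empty, Finset.image_empty, Finset.empty_union, if_pos hk0]
    rw [Finset.card_singleton]
  · -- k ≥ 1
    obtain ⟨i0, hi0⟩ := Finset.card_pos.1 (Nat.pos_of_ne_zero hk0)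
    have hright : (PF'.image (fun i => s(Fin.last n, i))).image (fun s => e2 n (g2 n s)) =
        {e2 n (Sum.inr false)} := by
      apply Finset.Subset.antisymm
      · intro c hc
        obtain ⟨s, hs, rfl⟩ := Finset.mem_image.1 hc
        obtain ⟨i, hi, rfl⟩ := Finset.mem_image.1 hs
        have hd : ¬(s(Fin.last n, i)).IsDiag := by
          rw [Sym2.mk_isDiag_iff]
          exact fun hh => (Finset.mem_erase.1 hi).1 hh.symm
        simp only [g2, dif_neg hd, dif_pos (Sym2.mem_mk_left _ _), Finset.mem_singleton]
      · intro c hc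
        rw [Finset.mem_singleton] at hc
        subst hc
        apply Finset.mem_image.2
        refine ⟨s(Fin.last n, i0), Finset.mem_image.2 ⟨i0, hi0, rfl⟩, ?_⟩
        have hd : ¬(s(Fin.last n, i0)).IsDiag := by
          rw [Sym2.mk_isDiag_iff]
          exact fun hh => (Finset.mem_erase.1 hi0).1 hh.symm
        simp only [g2, dif_neg hd, dif_pos (Sym2.mem_mk_left _ _)]
    have hinjA : Set.InjOn (fun s => e2 n (g2 n s))
        ↑(PF'.offDiag.image (fun q : Fin (n+1) × Fin (n+1) => s(q.1, q.2))) := by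
      intro s hs s' hs' hss
      obtain ⟨hd, hl⟩ := hleft s (by simpa using hs)
      obtain ⟨hd', hl'⟩ := hleft s' (by simpa using hs')
      simp only [g2, dif_neg hd, dif_neg hd', dif_neg hl, dif_neg hl'] at hss
      have := (e2 n).injective hss
      simp only [Sum.inl.injEq, Subtype.mk.injEq] at this
      exact map_low_inj n hl hl' this
    rw [himg, hD, Finset.image_union, hright]
    have hcardA : ((PF'.offDiag.image (fun q : Fin (n+1) × Fin (n+1) => s(q.1, q.2))).image
        (fun s => e2 n (g2 n s))).card = k.choose 2 := by
      rw [Finset.card_image_of_injOn hinjA]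
      exact Sym2.card_image_offDiag PF'
    -- disjointness of the three parts
    have hA_mem : ∀ c ∈ (PF'.offDiag.image (fun q : Fin (n+1) × Fin (n+1) => s(q.1, q.2))).image
        (fun s => e2 n (g2 n s)), ∃ v, c = e2 n (Sum.inl v) := by
      intro c hc
      obtain ⟨s, hs, rfl⟩ := Finset.mem_image.1 hc
      obtain ⟨hd, hl⟩ := hleft s hs
      exact ⟨⟨s.map (low n), map_low_nondiag n hd hl⟩,
        by simp only [g2, dif_neg hd, dif_neg hl]⟩
    rw [hdiagc]
    have hd1 : Disjoint ((PF'.offDiag.image (fun q : Fin (n+1) × Fin (n+1) => s(q.1, q.2))).image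
        (fun s => e2 n (g2 n s)) ∪ {e2 n (Sum.inr false)}) {e2 n (Sum.inr true)} := by
      rw [Finset.disjoint_singleton_right, Finset.mem_union]
      rintro (hc | hc)
      · obtain ⟨v, hv⟩ := hA_mem _ hc
        exact absurd ((e2 n).injective hv.symm) (by simp)
      · rw [Finset.mem_singleton] at hc
        have := (e2 n).injective hc
        simp at this
    have hd2 : Disjoint ((PF'.offDiag.image (fun q : Fin (n+1) × Fin (n+1) => s(q.1, q.2))).image
        (fun s => e2 n (g2 n s))) {e2 n (Sum.inr false)} := by
      rw [Finset.disjoint_singleton_right]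
      intro hc
      obtain ⟨v, hv⟩ := hA_mem _ hc
      exact absurd ((e2 n).injective hv.symm) (by simp)
    rw [Finset.card_union_of_disjoint hd1, Finset.card_union_of_disjoint hd2, hcardA,
      Finset.card_singleton, Finset.card_singleton, if_neg hk0]

end C2

section C2b
variable (n : ℕ) [NeZero n]

lemma erase_card_k {X : Set ℕ} (hX : X.Infinite) :
    ((PFin (n+1) X).erase (Fin.last n)).card = (PFin (n+1) X).card - 1 := by
  rw [Finset.card_erase_of_mem (by rw [← lastF_eq]; exact last_mem_PFin hX)]

lemma FDelta2 (hn : 2 ≤ n) : FDelta (Δ2 n) =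
    (fun k => if k = 0 then 1 else k.choose 2 + 2) '' (Set.Iic n) := by
  ext r
  constructor
  · rintro ⟨X, hX, rfl⟩
    refine ⟨((PFin (n+1) X).erase (Fin.last n)).card, ?_, (count2 n X hX).symm⟩
    rw [Set.mem_Iic, erase_card_k n hX]
    have := PFin_card_le (N := n+1) (X := X)
    omega
  · rintro ⟨k, hk, rfl⟩
    rw [Set.mem_Iic] at hk
    set X : Set ℕ := {x | x < k} ∪ {x | n ≤ x} with hXdef
    have hX : X.Infinite := by
      apply Set.Infinite.mono (Set.subset_union_right)
      apply Set.infinite_of_not_bddAbove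
      rintro ⟨b, hb⟩
      have h1 : b + n ≤ b := hb (show b + n ∈ {x | n ≤ x} from by
        simp only [Set.mem_setOf_eq]; omega)
      omega
    refine ⟨X, hX, ?_⟩
    rw [count2 n X hX]
    have hPF : PFin (n+1) X = (Finset.range k ∪ {n}).image (pc (n+1)) := by
      ext i
      rw [mem_PFin, Finset.mem_image]
      constructor
      · rintro ⟨x, hx, rfl⟩
        rcases hx with hx | hx
        · exact ⟨x, by simp only [Finset.mem_union, Finset.mem_range,
            Finset.mem_singleton]; left; exact hx, rfl⟩
        · simp only [Set.mem_setOf_eq] at hx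
          refine ⟨n, by simp, ?_⟩
          rw [pc_large (show (n+1)-1 ≤ n from by omega), pc_large (show (n+1)-1 ≤ x from by omega)]
      · rintro ⟨k', hk', rfl⟩
        simp only [Finset.mem_union, Finset.mem_range, Finset.mem_singleton] at hk'
        rcases hk' with hk' | hk'
        · exact ⟨k', Or.inl hk', rfl⟩
        · refine ⟨n, Or.inr (show n ∈ {x : ℕ | n ≤ x} by simp), ?_⟩
          rw [hk']
    have hcard : (PFin (n+1) X).card = k + 1 := by
      rw [hPF]
      have hinj2 : Set.InjOn (pc (n+1)) ↑(Finset.range k ∪ {n}) := by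
        intro x hx y hy hxy
        simp only [Finset.coe_union, Finset.coe_singleton, Finset.coe_range, Set.mem_union,
          Set.mem_Iio, Set.mem_singleton_iff] at hx hy
        have hx' : x ≤ (n+1) - 1 := by rcases hx with h | h; omega; omega
        have hy' : y ≤ (n+1) - 1 := by rcases hy with h | h; omega; omega
        have := congrArg Fin.val hxy
        rw [pc_small hx', pc_small hy'] at this
        exact this
      rw [Finset.card_image_of_injOn hinj2, Finset.card_union_of_disjoint (by
        simp only [Finset.disjoint_singleton_right, Finset.mem_range]
        omega)]
      simp only [Finset.card_range, Finset.card_singleton]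
    rw [erase_card_k n hX, hcard]
    simp

lemma ncard_FDelta2 (hn : 2 ≤ n) : (FDelta (Δ2 n)).ncard = n + 1 := by
  rw [FDelta2 n hn]
  rw [Set.ncard_image_of_injOn (by
    intro a ha b hb hab'
    have hab : (if a = 0 then 1 else a.choose 2 + 2) = (if b = 0 then 1 else b.choose 2 + 2) := hab'
    simp only [Set.mem_Iic] at ha hb
    by_cases ha0 : a = 0 <;> by_cases hb0 : b = 0
    · rw [ha0, hb0]
    · rw [if_pos ha0, if_neg hb0] at hab
      have : 0 < b.choose 2 + 2 := by omega
      omega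
    · rw [if_neg ha0, if_pos hb0] at hab
      omega
    · rw [if_neg ha0, if_neg hb0] at hab
      simp only [add_left_inj] at hab
      by_contra hne
      rcases lt_or_gt_of_ne hne with h | h
      · exact absurd hab (Nat.ne_of_lt (choose_two_lt (by omega) h))
      · exact absurd hab.symm (Nat.ne_of_lt (choose_two_lt (by omega) h)))]
  rw [← Finset.coe_Iic, Set.ncard_coe_finset, Nat.card_Iic]

end C2b

/-- `ψ(binom(n,2)+1) = n` and `ψ(binom(n,2)+2) = n+1` for every `n ≥ 2`. -/
theorem stmt17 (n : ℕ) (hn : 2 ≤ n) :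
    psi (n.choose 2 + 1) = n ∧ psi (n.choose 2 + 2) = n + 1 := by
  haveI : NeZero n := ⟨by omega⟩
  constructor
  · apply le_antisymm
    · exact Nat.sInf_le ⟨Δ1 n, Δ1_symm n, Δ1_surj n hn, ncard_FDelta1 n hn⟩
    · unfold psi
      refine le_csInf ?_ ?_
      · exact ⟨n, Δ1 n, Δ1_symm n, Δ1_surj n hn, ncard_FDelta1 n hn⟩
      rintro k ⟨Δ, hs, hj, rfl⟩
      have hlb := lower_bound Δ hs hj
      by_contra hlt
      push_neg at hlt
      have h1 : (FDelta Δ).ncard.choose 2 ≤ (n-1).choose 2 :=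
        Nat.choose_le_choose 2 (by omega)
      have h2 : (n-1).choose 2 < n.choose 2 := choose_two_lt (by omega) (by omega)
      omega
  · apply le_antisymm
    · exact Nat.sInf_le ⟨Δ2 n, Δ2_symm n, Δ2_surj n, ncard_FDelta2 n hn⟩
    · unfold psi
      refine le_csInf ?_ ?_
      · exact ⟨n + 1, Δ2 n, Δ2_symm n, Δ2_surj n, ncard_FDelta2 n hn⟩
      rintro k ⟨Δ, hs, hj, rfl⟩
      have hlb := lower_bound Δ hs hj
      by_contra hlt
      push_neg at hlt
      have h1 : (FDelta Δ).ncard.choose 2 ≤ n.choose 2 :=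
        Nat.choose_le_choose 2 (by omega)
      omega
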